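/- Let R = ℚ[x]/(x^{n+1}). For λ ∈ ℚ define the ℚ-linear map T_λ : R → R by T_λ(x^k) = x^k·(1+λx)^{−k}. Then for all λ, μ ∈ ℚ and all A ∈ R, one has T_μ(T_λ(A)) = T_{λ+μ}(A). -/

import Mathlib

open Polynomial

/-- The ring ℚ[x]/(x^(n+1)). -/
abbrev Rq (n : ℕ) : Type :=
  Polynomial ℚ ⧸ Ideal.span {(Polynomial.X : Polynomial ℚ) ^ (n + 1)}

/-- The class of x in ℚ[x]/(x^(n+1)). -/
noncomputable def xq (n : ℕ) : Rq n :=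
  Ideal.Quotient.mk _ Polynomial.X

/-- Uniqueness of `Ring.inverse`. -/
lemma inv_eq {R : Type*} [CommRing R] {a b : R} (h : a * b = 1) :
    Ring.inverse a = b := by
  have ha : IsUnit a := IsUnit.of_mul_eq_one b h
  calc Ring.inverse a = Ring.inverse a * (a * b) := by rw [h, mul_one]
    _ = (Ring.inverse a * a) * b := by ring
    _ = b := by rw [Ring.inverse_mul_cancel a ha, one_mul]

/-- Algebra homs commute with `Ring.inverse` of units. -/
lemma map_inv_eq {F R S : Type*} [CommRing R] [CommRing S] [FunLike F R S]
    [RingHomClass F R S] (f : F) {a : R}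
    (ha : IsUnit a) : f (Ring.inverse a) = Ring.inverse (f a) := by
  symm
  apply inv_eq
  rw [← map_mul, Ring.mul_inverse_cancel a ha, map_one]

/-- Pure commutative-ring computation: x/(1+bx) composed with a gives x/(1+(a+b)x). -/
lemma aux_comm {R : Type*} [CommRing R] (x a b : R)
    (hb : IsUnit (1 + b * x)) (hab : IsUnit (1 + (a + b) * x)) :
    (x * Ring.inverse (1 + b * x)) *
      Ring.inverse (1 + a * (x * Ring.inverse (1 + b * x))) =
      x * Ring.inverse (1 + (a + b) * x) := by
  set v := Ring.inverse (1 + b * x) with hvdef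
  set w := Ring.inverse (1 + (a + b) * x) with hwdef
  have hv : (1 + b * x) * v = 1 := Ring.mul_inverse_cancel _ hb
  have hw : (1 + (a + b) * x) * w = 1 := Ring.mul_inverse_cancel _ hab
  have hfac : 1 + a * (x * v) = v * (1 + (a + b) * x) := by linear_combination -hv
  have hinv : Ring.inverse (1 + a * (x * v)) = (1 + b * x) * w := by
    apply inv_eq
    rw [hfac]
    calc v * (1 + (a + b) * x) * ((1 + b * x) * w)
        = ((1 + b * x) * v) * ((1 + (a + b) * x) * w) := by ring
      _ = 1 := by rw [hv, hw, mul_one]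
  rw [hinv]
  calc x * v * ((1 + b * x) * w) = ((1 + b * x) * v) * (x * w) := by ring
    _ = x * w := by rw [hv, one_mul]

lemma xq_pow_top (n : ℕ) : xq n ^ (n + 1) = 0 := by
  rw [xq, ← map_pow]
  exact Ideal.Quotient.eq_zero_iff_mem.mpr (Ideal.subset_span rfl)

lemma isUnit_one_add_smul (n : ℕ) (c : ℚ) : IsUnit (1 + c • xq n) := by
  apply IsNilpotent.isUnit_one_add
  exact ⟨n + 1, by rw [_root_.smul_pow, xq_pow_top, smul_zero]⟩

/-- The element x/(1+cx). -/
noncomputable def yq (n : ℕ) (c : ℚ) : Rq n :=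
  xq n * Ring.inverse (1 + c • xq n)

lemma yq_pow_top (n : ℕ) (c : ℚ) : yq n c ^ (n + 1) = 0 := by
  rw [yq, mul_pow, xq_pow_top, zero_mul]

/-- The algebra endomorphism x ↦ x/(1+cx). -/
noncomputable def phi (n : ℕ) (c : ℚ) : Rq n →ₐ[ℚ] Rq n :=
  Ideal.Quotient.liftₐ _ (aeval (yq n c)) (by
    intro p hp
    rw [Ideal.mem_span_singleton] at hp
    obtain ⟨q, rfl⟩ := hp
    rw [map_mul, map_pow, aeval_X, yq_pow_top, zero_mul])

lemma phi_x (n : ℕ) (c : ℚ) : phi n c (xq n) = yq n c := by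
  simp [phi, xq]
  exact (Ideal.Quotient.lift_mk _ _ _).trans (aeval_X _)

set_option maxHeartbeats 1000000 in
lemma ext_on_powers (n : ℕ) (f g : Rq n →ₗ[ℚ] Rq n)
    (h : ∀ k : ℕ, f (xq n ^ k) = g (xq n ^ k)) : f = g := by
  apply LinearMap.ext
  intro A
  obtain ⟨p, rfl⟩ := Ideal.Quotient.mk_surjective A
  induction p using Polynomial.induction_on' with
  | add p q hp hq => rw [map_add, map_add, map_add, hp, hq]
  | monomial i a =>
      have : (Ideal.Quotient.mk _ ((monomial i) a) : Rq n) = a • xq n ^ i := by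
        rw [← Ideal.Quotient.mkₐ_eq_mk ℚ, ← smul_X_eq_monomial, map_smul, map_pow]; rfl
      rw [this, map_smul, map_smul, h i]

lemma T_eq_phi (n : ℕ) (c : ℚ) (T : Rq n →ₗ[ℚ] Rq n)
    (hT : ∀ k : ℕ, T (xq n ^ k) = xq n ^ k * Ring.inverse ((1 + c • xq n) ^ k)) :
    T = (phi n c).toLinearMap := by
  apply ext_on_powers
  intro k
  rw [hT k]
  have h1 : (phi n c) (xq n ^ k) = yq n c ^ k := by rw [map_pow, phi_x]
  rw [AlgHom.toLinearMap_apply, h1, yq, mul_pow]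
  congr 1
  obtain ⟨u, hu⟩ := isUnit_one_add_smul n c
  rw [← hu, ← Units.val_pow_eq_pow_val, Ring.inverse_unit, Ring.inverse_unit,
    ← Units.val_pow_eq_pow_val, inv_pow]

lemma smul_def' (n : ℕ) (c : ℚ) (z : Rq n) : c • z = algebraMap ℚ (Rq n) c * z :=
  Algebra.smul_def c z

lemma phi_comp (n : ℕ) (lam mu : ℚ) (A : Rq n) :
    phi n mu (phi n lam A) = phi n (lam + mu) A := by
  have key : phi n mu (yq n lam) = yq n (lam + mu) := by
    have h1 : phi n mu (yq n lam) = yq n mu * Ring.inverse (1 + lam • yq n mu) := by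
      rw [yq, map_mul, phi_x, map_inv_eq (phi n mu) (isUnit_one_add_smul n lam)]
      congr 2
      rw [map_add, map_one, map_smul, phi_x]
    rw [h1, yq, yq]
    simp only [smul_def', map_add]
    have hb : IsUnit (1 + algebraMap ℚ (Rq n) mu * xq n) := by
      have := isUnit_one_add_smul n mu
      rwa [smul_def'] at this
    have hab : IsUnit (1 + (algebraMap ℚ (Rq n) lam + algebraMap ℚ (Rq n) mu) * xq n) := by
      have := isUnit_one_add_smul n (lam + mu)
      rwa [smul_def', map_add] at this
    exact aux_comm (xq n) (algebraMap ℚ (Rq n) lam) (algebraMap ℚ (Rq n) mu) hb hab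
  have hext := ext_on_powers n ((phi n mu).toLinearMap.comp (phi n lam).toLinearMap)
      (phi n (lam + mu)).toLinearMap (by
    intro k
    simp only [LinearMap.comp_apply, AlgHom.toLinearMap_apply, map_pow, phi_x, key])
  exact LinearMap.congr_fun hext A

/-- with T_λ(x^k) = x^k(1+λx)^{-k}, one has T_μ ∘ T_λ = T_{λ+μ}. -/
theorem stmt2 (n : ℕ) (lam mu : ℚ)
    (Tlam Tmu Tsum : Rq n →ₗ[ℚ] Rq n)
    (hlam : ∀ k : ℕ, Tlam (xq n ^ k) = xq n ^ k * Ring.inverse ((1 + lam • xq n) ^ k))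
    (hmu : ∀ k : ℕ, Tmu (xq n ^ k) = xq n ^ k * Ring.inverse ((1 + mu • xq n) ^ k))
    (hsum : ∀ k : ℕ, Tsum (xq n ^ k) = xq n ^ k * Ring.inverse ((1 + (lam + mu) • xq n) ^ k))
    (A : Rq n) :
    Tmu (Tlam A) = Tsum A := by
  rw [T_eq_phi n lam Tlam hlam, T_eq_phi n mu Tmu hmu, T_eq_phi n (lam + mu) Tsum hsum]
  exact phi_comp n lam mu A
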